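/- Let F be a finite set of points in ℝ² and s a compact segment with s ⊆ int(conv F). Then MER(F, s) = sup_{x ∈ s} MER(F, x) is attained at some point of s, and s is 1-well illuminated by F with any range r ≥ MER(F, s). -/

import Mathlib

abbrev Pt := EuclideanSpace ℝ (Fin 2)

/-- The minimum embracing range of a point. -/
noncomputable def MER (F : Finset Pt) (x : Pt) : ℝ :=
  sInf {r : ℝ | 0 < r ∧ x ∈ interior (convexHull ℝ {f : Pt | f ∈ F ∧ dist f x ≤ r})}

open Topology Filter

namespace MERaux

/-- The admissible range set. -/
def Tset (F : Finset Pt) (x : Pt) : Set ℝ :=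
  {r : ℝ | 0 < r ∧ x ∈ interior (convexHull ℝ {f : Pt | f ∈ F ∧ dist f x ≤ r})}

lemma MER_eq (F : Finset Pt) (x : Pt) : MER F x = sInf (Tset F x) := rfl

lemma bddBelow_Tset (F : Finset Pt) (x : Pt) : BddBelow (Tset F x) :=
  ⟨0, fun r hr => hr.1.le⟩

lemma mem_Tset_of_all (F : Finset Pt) (x : Pt)
    (hx : x ∈ interior (convexHull ℝ (F : Set Pt))) {r : ℝ} (hr : 0 < r)
    (hall : ∀ f ∈ F, dist f x ≤ r) : r ∈ Tset F x := by
  refine ⟨hr, ?_⟩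
  have : {f : Pt | f ∈ F ∧ dist f x ≤ r} = (F : Set Pt) := by
    ext f; simp only [Set.mem_setOf_eq, Finset.coe_sort_coe, Finset.mem_coe]
    exact ⟨fun h => h.1, fun h => ⟨h, hall f h⟩⟩
  rw [this]; exact hx

lemma Tset_nonempty (F : Finset Pt) (x : Pt)
    (hx : x ∈ interior (convexHull ℝ (F : Set Pt))) : (Tset F x).Nonempty := by
  obtain ⟨C, hC⟩ := (F.image fun f => dist f x).exists_le
  refine ⟨max C 0 + 1, mem_Tset_of_all F x hx (by positivity) fun f hf => ?_⟩
  have := hC _ (Finset.mem_image_of_mem (fun f => dist f x) hf)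
  calc dist f x ≤ C := this
    _ ≤ max C 0 + 1 := by linarith [le_max_left C (0:ℝ)]

/-- The infimum defining `MER` is attained (the admissible set is `[MER, ∞)`). -/
lemma sInf_mem_Tset (F : Finset Pt) (x : Pt)
    (hx : x ∈ interior (convexHull ℝ (F : Set Pt))) : MER F x ∈ Tset F x := by
  classical
  have hne := Tset_nonempty F x hx
  -- key: every admissible r is dominated below by an admissible distance value
  have key : ∀ r ∈ Tset F x, ∃ d ∈ (F.image fun f => dist f x).filter (· ∈ Tset F x),
      d ≤ r := by
    intro r hr
    set G : Finset Pt := F.filter (fun f => dist f x ≤ r) with hG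
    have hset : {f : Pt | f ∈ F ∧ dist f x ≤ r} = (G : Set Pt) := by
      ext f; simp [hG, Finset.mem_filter]
    have hGne : G.Nonempty := by
      by_contra h
      rw [Finset.not_nonempty_iff_eq_empty] at h
      have := hr.2
      rw [hset, h] at this
      simp at this
    set d : ℝ := G.sup' hGne (fun f => dist f x) with hd
    have hdr : d ≤ r := by
      apply Finset.sup'_le
      intro f hf
      exact (Finset.mem_filter.mp hf).2
    have hdpos : 0 < d := by
      by_contra h
      push_neg at h
      have hsub : (G : Set Pt) ⊆ {x} := by
        intro f hf
        have h1 : dist f x ≤ d := Finset.le_sup' (fun f => dist f x) hf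
        have : dist f x = 0 := le_antisymm (h1.trans h) dist_nonneg
        simpa [Set.mem_singleton_iff] using dist_eq_zero.mp this
      have h2 : convexHull ℝ (G : Set Pt) ⊆ {x} := by
        have := convexHull_mono (𝕜 := ℝ) hsub
        simpa [convexHull_singleton] using this
      have h3 := interior_mono h2
      rw [interior_singleton] at h3
      have := hr.2
      rw [hset] at this
      exact (h3 this).elim
    have hsets : {f : Pt | f ∈ F ∧ dist f x ≤ d} = {f : Pt | f ∈ F ∧ dist f x ≤ r} := by
      ext f
      simp only [Set.mem_setOf_eq]
      constructor
      · rintro ⟨h1, h2⟩; exact ⟨h1, h2.trans hdr⟩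
      · rintro ⟨h1, h2⟩
        refine ⟨h1, ?_⟩
        exact Finset.le_sup' (fun f => dist f x) (Finset.mem_filter.mpr ⟨h1, h2⟩)
    have hdT : d ∈ Tset F x := by
      refine ⟨hdpos, ?_⟩
      rw [hsets]
      exact hr.2
    obtain ⟨f, hf, hfd⟩ := Finset.exists_mem_eq_sup' hGne (fun f => dist f x)
    refine ⟨d, Finset.mem_filter.mpr ⟨?_, by simpa using hdT⟩, hdr⟩
    rw [hd, hfd]
    exact Finset.mem_image_of_mem _ (Finset.mem_filter.mp hf).1
  obtain ⟨r₀, hr₀⟩ := Tset_nonempty F x hx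
  obtain ⟨d₁, hd₁, _⟩ := key r₀ hr₀
  have hEne : ((F.image fun f => dist f x).filter (· ∈ Tset F x)).Nonempty := ⟨d₁, hd₁⟩
  set d₀ := ((F.image fun f => dist f x).filter (· ∈ Tset F x)).min' hEne with hd₀
  have hd₀T : d₀ ∈ Tset F x := by
    have := Finset.min'_mem _ hEne
    exact (Finset.mem_filter.mp this).2
  have hlb : ∀ r ∈ Tset F x, d₀ ≤ r := by
    intro r hr
    obtain ⟨d, hd, hdr⟩ := key r hr
    exact (Finset.min'_le _ _ hd).trans hdr
  have : sInf (Tset F x) = d₀ :=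
    le_antisymm (csInf_le (bddBelow_Tset F x) hd₀T) (le_csInf ⟨r₀, hr₀⟩ hlb)
  rw [MER_eq, this]
  exact hd₀T

lemma MER_pos (F : Finset Pt) (x : Pt)
    (hx : x ∈ interior (convexHull ℝ (F : Set Pt))) : 0 < MER F x :=
  (sInf_mem_Tset F x hx).1

/-- One-sided local Lipschitz bound giving upper semicontinuity. -/
lemma usc (F : Finset Pt) (x : Pt)
    (hx : x ∈ interior (convexHull ℝ (F : Set Pt))) (y : Pt)
    (hy : y ∈ interior (convexHull ℝ {f : Pt | f ∈ F ∧ dist f x ≤ MER F x})) :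
    MER F y ≤ MER F x + dist x y := by
  have hmem : MER F x + dist x y ∈ Tset F y := by
    refine ⟨by have := MER_pos F x hx; have := dist_nonneg (x := x) (y := y); linarith, ?_⟩
    have hsub : {f : Pt | f ∈ F ∧ dist f x ≤ MER F x}
        ⊆ {f : Pt | f ∈ F ∧ dist f y ≤ MER F x + dist x y} := by
      rintro f ⟨h1, h2⟩
      refine ⟨h1, ?_⟩
      calc dist f y ≤ dist f x + dist x y := dist_triangle f x y
        _ ≤ MER F x + dist x y := by linarith
    exact interior_mono (convexHull_mono hsub) hy
  exact csInf_le (bddBelow_Tset F y) hmem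

end MERaux

open MERaux in
/-- If the compact segment `s = [a, b]` lies inside `int (conv F)`, then
`MER F s = sup_{x ∈ s} MER F x` is attained at some point of `s`, and `s` is
1-well illuminated by `F` with any range `r ≥ MER F s`. -/
theorem MER_segment_attained (F : Finset Pt) (a b : Pt)
    (hs : segment ℝ a b ⊆ interior (convexHull ℝ (F : Set Pt))) :
    (∃ x₀ ∈ segment ℝ a b, MER F x₀ = sSup (MER F '' segment ℝ a b)) ∧
    ∀ r : ℝ, sSup (MER F '' segment ℝ a b) ≤ r →
      ∀ x ∈ segment ℝ a b,
        x ∈ interior (convexHull ℝ {f : Pt | f ∈ F ∧ dist f x ≤ r}) := by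
  have hcomp : IsCompact (segment ℝ a b) := by
    rw [← convexHull_pair]
    exact (Set.toFinite {a, b}).isCompact_convexHull ℝ
  have ha : a ∈ segment ℝ a b := left_mem_segment ℝ a b
  -- uniform upper bound on MER over the segment
  obtain ⟨C, hC⟩ := (F.image fun f => dist f a).exists_le
  set K : ℝ := max C 0 + dist a b + 1 with hK
  have hbound : ∀ x ∈ segment ℝ a b, MER F x ≤ K := by
    intro x hx
    have hax : dist a x ≤ dist a b := by
      have : segment ℝ a b ⊆ Metric.closedBall a (dist a b) :=
        (convex_closedBall a (dist a b)).segment_subset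
          (by simp [dist_nonneg]) (by simp [dist_comm])
      simpa [Metric.mem_closedBall, dist_comm] using this hx
    have hKT : K ∈ Tset F x := by
      refine mem_Tset_of_all F x (hs hx) (by positivity) fun f hf => ?_
      have h1 : dist f a ≤ C := hC _ (Finset.mem_image_of_mem _ hf)
      calc dist f x ≤ dist f a + dist a x := dist_triangle f a x
        _ ≤ max C 0 + dist a b := by
            have := le_max_left C (0:ℝ); linarith
        _ ≤ K := by simp [hK]
    exact csInf_le (bddBelow_Tset F x) hKT
  have himne : (MER F '' segment ℝ a b).Nonempty := ⟨MER F a, a, ha, rfl⟩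
  have hbdd : BddAbove (MER F '' segment ℝ a b) := by
    refine ⟨K, ?_⟩
    rintro _ ⟨x, hx, rfl⟩
    exact hbound x hx
  set M : ℝ := sSup (MER F '' segment ℝ a b) with hM
  -- choose a near-maximizing sequence
  have hseq : ∀ n : ℕ, ∃ y ∈ segment ℝ a b, M - 1 / (n + 1) < MER F y := by
    intro n
    have hlt : M - 1 / (n + 1) < M := by
      have : (0:ℝ) < 1 / (n + 1) := by positivity
      linarith
    obtain ⟨v, hv, hvlt⟩ := exists_lt_of_lt_csSup himne hlt
    obtain ⟨y, hy, rfl⟩ := hv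
    exact ⟨y, hy, hvlt⟩
  choose u hu hlt using hseq
  obtain ⟨x₀, hx₀, φ, hφ, htend⟩ := hcomp.tendsto_subseq hu
  have hx₀F : x₀ ∈ interior (convexHull ℝ (F : Set Pt)) := hs hx₀
  -- MER x₀ ≥ M
  have hge : M ≤ MER F x₀ := by
    by_contra h
    push_neg at h
    set ε : ℝ := M - MER F x₀ with hε
    have hεpos : 0 < ε := by simp [hε]; linarith
    -- eventually u (φ n) lies in the open neighborhood and close to x₀
    have hU : interior (convexHull ℝ {f : Pt | f ∈ F ∧ dist f x₀ ≤ MER F x₀}) ∈ 𝓝 x₀ :=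
      isOpen_interior.mem_nhds (sInf_mem_Tset F x₀ hx₀F).2
    have h1 : ∀ᶠ n in Filter.atTop, (u ∘ φ) n ∈
        interior (convexHull ℝ {f : Pt | f ∈ F ∧ dist f x₀ ≤ MER F x₀}) :=
      htend.eventually_mem hU
    have h2 : ∀ᶠ n in Filter.atTop, dist x₀ ((u ∘ φ) n) < ε / 2 := by
      have := htend.eventually (Metric.ball_mem_nhds x₀ (by linarith : (0:ℝ) < ε / 2))
      filter_upwards [this] with n hn
      simpa [Metric.mem_ball, dist_comm] using hn
    obtain ⟨N, hN⟩ := exists_nat_one_div_lt (by linarith : (0:ℝ) < ε / 2)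
    have h3 : ∀ᶠ n in Filter.atTop, N ≤ n := Filter.eventually_ge_atTop N
    obtain ⟨n, hn1, hn2, hn3⟩ := (h1.and (h2.and h3)).exists
    have husc := usc F x₀ hx₀F ((u ∘ φ) n) hn1
    have hsmall : 1 / ((φ n : ℝ) + 1) < ε / 2 := by
      have hφn : (N : ℝ) ≤ (φ n : ℝ) := by
        exact_mod_cast hn3.trans hφ.le_apply
      have h4 : 1 / ((φ n : ℝ) + 1) ≤ 1 / ((N : ℝ) + 1) := by
        apply one_div_le_one_div_of_le
        · positivity
        · linarith
      linarith
    have := hlt (φ n)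
    simp only [Function.comp] at husc hn2
    have : M - 1 / ((φ n : ℝ) + 1) < MER F x₀ + dist x₀ (u (φ n)) := lt_of_lt_of_le this husc
    have : M - ε / 2 < MER F x₀ + ε / 2 := by linarith
    simp [hε] at this
    linarith
  have hle : MER F x₀ ≤ M := le_csSup hbdd ⟨x₀, hx₀, rfl⟩
  have heq : MER F x₀ = M := le_antisymm hle hge
  refine ⟨⟨x₀, hx₀, heq⟩, ?_⟩
  intro r hr x hx
  have hxF := hs hx
  have hMER : MER F x ≤ r := by
    have : MER F x ≤ M := le_csSup hbdd ⟨x, hx, rfl⟩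
    linarith
  have hmem := sInf_mem_Tset F x hxF
  have : r ∈ Tset F x := by
    refine ⟨lt_of_lt_of_le hmem.1 hMER, ?_⟩
    have hsub : {f : Pt | f ∈ F ∧ dist f x ≤ MER F x} ⊆ {f : Pt | f ∈ F ∧ dist f x ≤ r} := by
      rintro f ⟨h1, h2⟩; exact ⟨h1, h2.trans hMER⟩
    exact interior_mono (convexHull_mono hsub) hmem.2
  exact this.2
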